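/- arXiv:math/0509678 — 6 statements merged into one kernel-verified Lean document; each statement's English description precedes it below -/
import Mathlib

section
/- An element a ∈ IS_n is decomposable in the sandwich semigroup (IS_n, *) (i.e. a = b * c for some b, c ∈ IS_n) if and only if rank(a) ≤ k. -/
open Equiv

/-- `IS n` : the symmetric inverse semigroup on `{1,…,n}`, modeled as partial
equivalences of `Fin n`.  Composition is left-to-right: `(x.trans y) t = y (x t)`. -/
abbrev IS (n : ℕ) := PEquiv (Fin n) (Fin n)

/-- The domain of a partial injective transformation. -/
def sdom {n : ℕ} (x : IS n) : Set (Fin n) := {a | (x a).isSome}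

/-- The image of a partial injective transformation. -/
def sim {n : ℕ} (x : IS n) : Set (Fin n) := {b | (x.symm b).isSome}

/-- The rank of a partial injective transformation: the cardinality of its image. -/
noncomputable def srank {n : ℕ} (x : IS n) : ℕ := Nat.card (sim x)

/-- The set `A = {1,…,k}` inside `Fin n`, i.e. the first `k` elements. -/
def SetA (n k : ℕ) : Set (Fin n) := {i | (i : ℕ) < k}

/-- The idempotent `e` acting identically on `A`, with `dom e = im e = A`. -/
def sandE (n k : ℕ) : IS n where
  toFun i := if (i : ℕ) < k then some i else none
  invFun i := if (i : ℕ) < k then some i else none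
  inv a b := by
    try dsimp only
    split_ifs with h1 h2 <;>
      simp_all [Option.mem_def, eq_comm] <;> rintro rfl <;> omega

/-- The sandwich multiplication `x * y = x e y` (left-to-right composition). -/
def smul (n k : ℕ) (x y : IS n) : IS n := (x.trans (sandE n k)).trans y

lemma sandE_apply (n k : ℕ) (i : Fin n) :
    sandE n k i = if (i : ℕ) < k then some i else none := rfl

lemma trans_apply' {α β γ : Type*} (f : α ≃. β) (g : β ≃. γ) (x : α) :
    (f.trans g) x = (f x).bind g := rfl

/-- The subtype `A` has `k` elements. -/
lemma card_A (n k : ℕ) (hkn : k ≤ n) : Nat.card {i : Fin n // (i : ℕ) < k} = k := by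
  have e : {i : Fin n // (i : ℕ) < k} ≃ Fin k :=
    { toFun := fun i => ⟨i.1, i.2⟩
      invFun := fun j => ⟨⟨j.1, lt_of_lt_of_le j.2 hkn⟩, j.2⟩
      left_inv := fun i => rfl
      right_inv := fun j => rfl }
  rw [Nat.card_congr e]; simp

/-- The domain and the image of `a` are equinumerous. -/
noncomputable def domEquivIm {n : ℕ} (a : IS n) : sdom a ≃ sim a where
  toFun x := ⟨(a x.1).get x.2, by
    have h : a x.1 = some ((a x.1).get x.2) := (Option.some_get x.2).symm
    have : a.symm ((a x.1).get x.2) = some x.1 := a.eq_some_iff.2 h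
    simp [sim, this]⟩
  invFun y := ⟨(a.symm y.1).get y.2, by
    have h : a.symm y.1 = some ((a.symm y.1).get y.2) := (Option.some_get y.2).symm
    have : a ((a.symm y.1).get y.2) = some y.1 := a.eq_some_iff.1 h
    simp [sdom, this]⟩
  left_inv x := by
    have h : a x.1 = some ((a x.1).get x.2) := (Option.some_get x.2).symm
    have h2 : a.symm ((a x.1).get x.2) = some x.1 := a.eq_some_iff.2 h
    exact Subtype.ext (by simp [h2])
  right_inv y := by
    have h : a.symm y.1 = some ((a.symm y.1).get y.2) := (Option.some_get y.2).symm
    have h2 : a ((a.symm y.1).get y.2) = some y.1 := a.eq_some_iff.1 h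
    exact Subtype.ext (by simp [h2])

lemma srank_eq_card_dom {n : ℕ} (a : IS n) : srank a = Nat.card (sdom a) :=
  (Nat.card_congr (domEquivIm a)).symm

/-- `a` is decomposable in `(IS_n, *)` iff `rank a ≤ k`. -/
theorem decomposable_iff_rank_le (n k : ℕ) (hk : 1 ≤ k) (hkn : k ≤ n) (a : IS n) :
    (∃ b c : IS n, smul n k b c = a) ↔ srank a ≤ k := by
  constructor
  · rintro ⟨b, c, rfl⟩
    -- every element of the image comes, via `c`, from an element of `A`
    have key : ∀ y ∈ sim (smul n k b c), ∃ z : Fin n, c.symm y = some z ∧ (z : ℕ) < k := by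
      intro y hy
      have hsome : ((smul n k b c).symm y).isSome := hy
      set t := ((smul n k b c).symm y).get hsome with ht
      have h1 : (smul n k b c).symm y = some t := (Option.some_get hsome).symm
      have h2 : (smul n k b c) t = some y := (smul n k b c).eq_some_iff.1 h1
      rw [smul, trans_apply', trans_apply'] at h2
      rcases Option.bind_eq_some_iff.1 h2 with ⟨z, hz1, hz2⟩
      rcases Option.bind_eq_some_iff.1 hz1 with ⟨w, _, hw2⟩
      rw [sandE_apply] at hw2
      split_ifs at hw2 with hwk
      rcases Option.some_inj.1 hw2 with rfl
      exact ⟨w, c.eq_some_iff.2 hz2, hwk⟩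
    have hinj : ∃ f : sim (smul n k b c) → {i : Fin n // (i : ℕ) < k},
        Function.Injective f := by
      refine ⟨fun y => ⟨(key y.1 y.2).choose, (key y.1 y.2).choose_spec.2⟩, ?_⟩
      intro y₁ y₂ h
      have h1 := (key y₁.1 y₁.2).choose_spec.1
      have h2 := (key y₂.1 y₂.2).choose_spec.1
      have hz : (key y₁.1 y₁.2).choose = (key y₂.1 y₂.2).choose := by
        simpa using congrArg Subtype.val h
      rw [hz] at h1
      have e1 := c.eq_some_iff.1 h1
      have e2 := c.eq_some_iff.1 h2
      exact Subtype.ext (Option.some_inj.1 (e1.symm.trans e2))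
    obtain ⟨f, hf⟩ := hinj
    calc srank (smul n k b c) ≤ Nat.card {i : Fin n // (i : ℕ) < k} :=
          Nat.card_le_card_of_injective f hf
      _ = k := card_A n k hkn
  · intro hr
    classical
    set s : Finset (Fin n) := (Set.toFinite (sdom a)).toFinset with hs
    have hdom : ∀ t : Fin n, t ∈ s ↔ (a t).isSome := by
      intro t; rw [hs, Set.Finite.mem_toFinset]; rfl
    have hscard : s.card ≤ k := by
      have h1 : Nat.card (sdom a) = s.card := by
        rw [Nat.card_coe_set_eq, Set.ncard_eq_toFinset_card _ (Set.toFinite (sdom a))]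
      rw [srank_eq_card_dom, h1] at hr
      exact hr
    set Ak : Finset (Fin n) := Finset.univ.filter (fun i => (i : ℕ) < k) with hAk
    have hAkcard : Ak.card = k := by
      have h1 : Fintype.card {i : Fin n // (i : ℕ) < k} = Ak.card := by
        rw [hAk, Fintype.card_subtype]
      have h2 : Nat.card {i : Fin n // (i : ℕ) < k} = k := card_A n k hkn
      rw [Nat.card_eq_fintype_card] at h2
      omega
    obtain ⟨u, huAk, hucard⟩ : ∃ u ⊆ Ak, u.card = s.card :=
      Finset.exists_subset_card_eq (hAkcard ▸ hscard)
    have e1 : {x : Fin n // x ∈ s} ≃ {x : Fin n // x ∈ u} :=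
      Fintype.equivOfCardEq (by rw [Fintype.card_coe, Fintype.card_coe, hucard])
    have e2 : {x : Fin n // ¬ x ∈ s} ≃ {x : Fin n // ¬ x ∈ u} :=
      Fintype.equivOfCardEq (by
        rw [Fintype.card_subtype_compl, Fintype.card_subtype_compl,
          Fintype.card_coe, Fintype.card_coe, hucard])
    set σ : Equiv.Perm (Fin n) := Equiv.subtypeCongr e1 e2 with hσdef
    have hσ : ∀ t : Fin n, t ∈ s → (σ t : ℕ) < k := by
      intro t ht
      have h1 : σ t = (e1 ⟨t, ht⟩ : Fin n) := by
        simp [hσdef, Equiv.subtypeCongr, ht]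
      have h2 : (e1 ⟨t, ht⟩ : Fin n) ∈ u := (e1 ⟨t, ht⟩).2
      have h3 := huAk h2
      rw [hAk, Finset.mem_filter] at h3
      rw [h1]; exact h3.2
    refine ⟨σ.toPEquiv, (σ.symm).toPEquiv.trans a, ?_⟩
    apply PEquiv.ext; intro t
    rw [smul, trans_apply', trans_apply']
    rw [Equiv.toPEquiv_apply, Option.bind_some, sandE_apply]
    split_ifs with h
    · simp [trans_apply', Equiv.toPEquiv_apply]
    · rw [Option.bind_none]
      symm
      rw [← Option.not_isSome_iff_eq_none]
      intro hsome
      exact h (hσ t ((hdom t).2 hsome))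
end

section
/- Every bijection π of the set IS_n satisfying π(a) ∼ a for all a ∈ IS_n is a semigroup automorphism of (IS_n, *); these bijections form a subgroup of Aut(IS_n, *). -/
open Equiv

/-- `a` is decomposable in `(IS_n, *)` if `a = b * c` for some `b, c`. -/
def Decomp (n k : ℕ) (a : IS n) : Prop := ∃ b c : IS n, smul n k b c = a

/-- `M₁(a) = {x ∈ dom a : x ∈ A, a x ∈ A}`. -/
def M1 (n k : ℕ) (a : IS n) : Set (Fin n) :=
  {x | x ∈ SetA n k ∧ ∃ y ∈ SetA n k, a x = some y}

/-- `M₂(a) = {x ∈ dom a : x ∈ A, a x ∈ Ā}`. -/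
def M2 (n k : ℕ) (a : IS n) : Set (Fin n) :=
  {x | x ∈ SetA n k ∧ ∃ y, y ∉ SetA n k ∧ a x = some y}

/-- `M₃(a) = {x ∈ dom a : x ∈ Ā, a x ∈ A}`. -/
def M3 (n k : ℕ) (a : IS n) : Set (Fin n) :=
  {x | x ∉ SetA n k ∧ ∃ y ∈ SetA n k, a x = some y}

/-- The relation `∼` : for indecomposable `a, b`, `a ∼ b` iff `Mᵢ(a) = Mᵢ(b)` for
`i = 1,2,3` and `a x = b x` on `M₁(a) ∪ M₂(a) ∪ M₃(a)`; if `a` or `b` is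
decomposable, `a ∼ b` iff `a = b`. -/
def SimRel (n k : ℕ) (a b : IS n) : Prop :=
  (¬ Decomp n k a ∧ ¬ Decomp n k b ∧ M1 n k a = M1 n k b ∧ M2 n k a = M2 n k b ∧
    M3 n k a = M3 n k b ∧ ∀ x ∈ M1 n k a ∪ M2 n k a ∪ M3 n k a, a x = b x)
  ∨ ((Decomp n k a ∨ Decomp n k b) ∧ a = b)

section Aux

lemma tapply {n : ℕ} (f g : IS n) (t : Fin n) : (f.trans g) t = (f t).bind g := rfl

lemma eapply (n k : ℕ) (t : Fin n) :
    sandE n k t = if (t : ℕ) < k then some t else none := rfl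

lemma simRel_refl (n k : ℕ) (a : IS n) : SimRel n k a a := by
  by_cases h : Decomp n k a
  · exact Or.inr ⟨Or.inl h, rfl⟩
  · exact Or.inl ⟨h, h, rfl, rfl, rfl, fun x _ => rfl⟩

lemma simRel_symm {n k : ℕ} {a b : IS n} (h : SimRel n k a b) : SimRel n k b a := by
  rcases h with ⟨h1, h2, h3, h4, h5, h6⟩ | ⟨h1, h2⟩
  · exact Or.inl ⟨h2, h1, h3.symm, h4.symm, h5.symm, fun x hx => by
      rw [h3, h4, h5] at h6; exact (h6 x hx).symm⟩
  · exact Or.inr ⟨h1.symm, h2.symm⟩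

lemma simRel_trans {n k : ℕ} {a b c : IS n} (h1 : SimRel n k a b) (h2 : SimRel n k b c) :
    SimRel n k a c := by
  rcases h2 with ⟨g1, g2, g3, g4, g5, g6⟩ | ⟨g1, g2⟩
  · rcases h1 with ⟨f1, f2, f3, f4, f5, f6⟩ | ⟨f1, f2⟩
    · refine Or.inl ⟨f1, g2, f3.trans g3, f4.trans g4, f5.trans g5, fun x hx => ?_⟩
      rw [f6 x hx]
      rw [f3, f4, f5] at hx
      exact g6 x hx
    · rcases f1 with h | h
      · exact absurd (f2 ▸ h) g1
      · exact f2 ▸ Or.inl ⟨g1, g2, g3, g4, g5, g6⟩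
  · exact g2 ▸ h1

/-- If `b ∼ a` then `b e = a e`. -/
lemma transE_eq {n k : ℕ} {a b : IS n} (h : SimRel n k b a) :
    b.trans (sandE n k) = a.trans (sandE n k) := by
  rcases h with ⟨-, -, h1, -, h3, hv⟩ | ⟨-, rfl⟩
  case inr => rfl
  · apply PEquiv.ext; intro t
    rw [tapply, tapply]
    have key : ∀ y : Fin n, (y : ℕ) < k → a t = some y → b t = a t := by
      intro y hy ha
      have ht : t ∈ M1 n k a ∨ t ∈ M3 n k a := by
        by_cases htA : (t : ℕ) < k
        · exact Or.inl ⟨htA, y, hy, ha⟩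
        · exact Or.inr ⟨htA, y, hy, ha⟩
      have htb : t ∈ M1 n k b ∪ M2 n k b ∪ M3 n k b := by
        rcases ht with ht | ht
        · exact Or.inl (Or.inl (h1 ▸ ht))
        · exact Or.inr (h3 ▸ ht)
      exact hv t htb
    cases hb : b t with
    | none =>
      cases ha : a t with
      | none => rfl
      | some z =>
        by_cases hz : (z : ℕ) < k
        · rw [key z hz ha, ha] at hb; exact absurd hb (by simp)
        · simp [eapply, hz]
    | some y =>
      by_cases hy : (y : ℕ) < k
      · -- t ∈ M1 b ∪ M3 b, so b t = a t
        have ht : t ∈ M1 n k b ∪ M2 n k b ∪ M3 n k b := by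
          by_cases htA : (t : ℕ) < k
          · exact Or.inl (Or.inl ⟨htA, y, hy, hb⟩)
          · exact Or.inr ⟨htA, y, hy, hb⟩
        rw [← hv t ht, hb]
      · -- LHS none
        cases ha : a t with
        | none => simp [eapply, hy]
        | some z =>
          by_cases hz : (z : ℕ) < k
          · rw [key z hz ha, ha] at hb
            cases hb; exact absurd hz hy
          · simp [eapply, hy, hz]

/-- If `b ∼ a` then `e b = e a`. -/
lemma eTrans_eq {n k : ℕ} {a b : IS n} (h : SimRel n k b a) :
    (sandE n k).trans b = (sandE n k).trans a := by
  rcases h with ⟨-, -, h1, h2, -, hv⟩ | ⟨-, rfl⟩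
  case inr => rfl
  · apply PEquiv.ext; intro t
    rw [tapply, tapply, eapply]
    by_cases htA : (t : ℕ) < k
    · simp only [htA, if_pos, Option.bind_some]
      cases hb : b t with
      | none =>
        cases ha : a t with
        | none => rfl
        | some z =>
          have ht : t ∈ M1 n k a ∨ t ∈ M2 n k a := by
            by_cases hz : (z : ℕ) < k
            · exact Or.inl ⟨htA, z, hz, ha⟩
            · exact Or.inr ⟨htA, z, hz, ha⟩
          have htb : t ∈ M1 n k b ∪ M2 n k b ∪ M3 n k b := by
            rcases ht with ht | ht
            · exact Or.inl (Or.inl (h1 ▸ ht))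
            · exact Or.inl (Or.inr (h2 ▸ ht))
          rw [hv t htb, ha] at hb; exact absurd hb (by simp)
      | some y =>
        have ht : t ∈ M1 n k b ∪ M2 n k b ∪ M3 n k b := by
          by_cases hy : (y : ℕ) < k
          · exact Or.inl (Or.inl ⟨htA, y, hy, hb⟩)
          · exact Or.inl (Or.inr ⟨htA, y, hy, hb⟩)
        rw [← hv t ht, hb]
    · simp [htA]

lemma smul_eq_of_simRel {n k : ℕ} {x y x' y' : IS n}
    (hx : SimRel n k x' x) (hy : SimRel n k y' y) :
    smul n k x' y' = smul n k x y := by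
  unfold smul
  rw [transE_eq hx, PEquiv.trans_assoc, PEquiv.trans_assoc, eTrans_eq hy]

end Aux

/-- every bijection `π` of `IS_n` with `π a ∼ a` for all `a` is an
automorphism of `(IS_n, *)`, and such bijections form a subgroup of the group of
permutations of `IS_n` (hence of `Aut(IS_n, *)`). -/
theorem simRel_preserving_subgroup (n k : ℕ) (hk : 1 ≤ k) (hkn : k ≤ n) :
    (∀ π : Equiv.Perm (IS n), (∀ a, SimRel n k (π a) a) →
      ∀ x y : IS n, π (smul n k x y) = smul n k (π x) (π y)) ∧
    ∃ G : Subgroup (Equiv.Perm (IS n)),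
      ∀ π : Equiv.Perm (IS n), π ∈ G ↔ ∀ a, SimRel n k (π a) a := by
  constructor
  · intro π hπ x y
    have hdec : Decomp n k (smul n k x y) := ⟨x, y, rfl⟩
    have h1 : π (smul n k x y) = smul n k x y := by
      rcases hπ (smul n k x y) with ⟨-, hnd, -⟩ | ⟨-, h⟩
      · exact absurd hdec hnd
      · exact h
    rw [h1, smul_eq_of_simRel (hπ x) (hπ y)]
  · refine ⟨⟨⟨⟨{π | ∀ a, SimRel n k (π a) a}, ?_⟩, ?_⟩, ?_⟩, fun π => Iff.rfl⟩
    · intro π σ hπ hσ a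
      exact simRel_trans (hπ (σ a)) (hσ a)
    · intro a; exact simRel_refl n k a
    · intro π hπ a
      have := hπ (π⁻¹ a)
      rw [show π (π⁻¹ a) = a from π.apply_symm_apply a] at this
      exact simRel_symm this
end

section
/- If an automorphism π of (IS_n, *) is of the form π = τ_(g,h₁,h₂) for some g ∈ S(A), h₁, h₂ ∈ S(Ā) and also satisfies π(a) ∼ a for all a ∈ IS_n, then π is the identity map on IS_n. -/
open Equiv

/-- `g⋈h` : the permutation of `Fin n` acting as `g` on `A` and as `h` on `Ā`. -/
def bowtie {n : ℕ} (k : ℕ) (g : Perm {x : Fin n // (x : ℕ) < k})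
    (h : Perm {x : Fin n // ¬ (x : ℕ) < k}) : Perm (Fin n) :=
  Equiv.Perm.subtypeCongr g h

/-- `τ_(g,h₁,h₂) : a ↦ (g⋈h₁)⁻¹ · a · (g⋈h₂)` (ordinary, left-to-right, composition). -/
def tauMap {n : ℕ} (k : ℕ) (g : Perm {x : Fin n // (x : ℕ) < k})
    (h₁ h₂ : Perm {x : Fin n // ¬ (x : ℕ) < k}) (a : IS n) : IS n :=
  ((bowtie k g h₁).symm.toPEquiv.trans a).trans (bowtie k g h₂).toPEquiv


lemma tauMap_apply {n : ℕ} (k : ℕ) (g : Perm {x : Fin n // (x : ℕ) < k})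
    (h₁ h₂ : Perm {x : Fin n // ¬ (x : ℕ) < k}) (a : IS n) (t : Fin n) :
    tauMap k g h₁ h₂ a t
      = (a ((bowtie k g h₁).symm t)).map (bowtie k g h₂) := by
  show (((((bowtie k g h₁).symm.toPEquiv t)).bind a).bind (bowtie k g h₂).toPEquiv) = _
  rw [Equiv.toPEquiv_apply, Option.bind_some]
  cases a ((bowtie k g h₁).symm t) <;> simp [Equiv.toPEquiv_apply]

lemma sandE_mem {n k : ℕ} {x : Fin n} (hx : (x : ℕ) < k) : x ∈ sandE n k x := by
  show (if (x : ℕ) < k then some x else none) = some x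
  rw [if_pos hx]

lemma decomp_single {n k : ℕ} (x y : Fin n) (h : (x : ℕ) < k ∨ (y : ℕ) < k) :
    Decomp n k (PEquiv.single x y) := by
  rcases h with h | h
  · exact ⟨PEquiv.single x x, PEquiv.single x y, by
      rw [smul, PEquiv.single_trans_of_mem x (sandE_mem h), PEquiv.single_trans_single]⟩
  · exact ⟨PEquiv.single x y, PEquiv.single y y, by
      rw [smul, PEquiv.single_trans_of_mem x (sandE_mem h), PEquiv.single_trans_single]⟩

lemma key_fix {n k : ℕ} (g : Perm {x : Fin n // (x : ℕ) < k})
    (h₁ h₂ : Perm {x : Fin n // ¬ (x : ℕ) < k})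
    (hsim : ∀ a : IS n, SimRel n k (tauMap k g h₁ h₂ a) a)
    (x y : Fin n) (h : (x : ℕ) < k ∨ (y : ℕ) < k) :
    bowtie k g h₁ x = x ∧ bowtie k g h₂ y = y := by
  have hd := decomp_single (k := k) x y h
  have heq : tauMap k g h₁ h₂ (PEquiv.single x y) = PEquiv.single x y := by
    rcases hsim (PEquiv.single x y) with ⟨_, hnd, _⟩ | ⟨_, he⟩
    · exact absurd hd hnd
    · exact he
  have h2 := congrArg (fun f : IS n => f (bowtie k g h₁ x)) heq
  simp only [tauMap_apply, Equiv.symm_apply_apply, PEquiv.single_apply,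
    Option.map_some] at h2
  rcases (PEquiv.mem_single_iff _ _ _ _).1 h2.symm with ⟨hx, hy⟩
  exact ⟨hx, hy⟩

/-- if `π = τ_(g,h₁,h₂)` satisfies `π a ∼ a` for all `a`, then `π`
is the identity map on `IS_n`. -/
theorem tau_simRel_eq_id (n k : ℕ) (hk : 1 ≤ k) (hkn : k ≤ n)
    (g : Perm {x : Fin n // (x : ℕ) < k})
    (h₁ h₂ : Perm {x : Fin n // ¬ (x : ℕ) < k})
    (hsim : ∀ a : IS n, SimRel n k (tauMap k g h₁ h₂ a) a) :
    ∀ a : IS n, tauMap k g h₁ h₂ a = a := by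
  have hn : 0 < n := lt_of_lt_of_le hk hkn
  set z : Fin n := ⟨0, hn⟩ with hz
  have hzk : (z : ℕ) < k := hk
  have hB1 : ∀ x : Fin n, bowtie k g h₁ x = x := by
    intro x
    by_cases hx : (x : ℕ) < k
    · exact (key_fix g h₁ h₂ hsim x x (Or.inl hx)).1
    · exact (key_fix g h₁ h₂ hsim x z (Or.inr hzk)).1
  have hB2 : ∀ y : Fin n, bowtie k g h₂ y = y := by
    intro y
    exact (key_fix g h₁ h₂ hsim z y (Or.inl hzk)).2
  intro a
  ext t
  rw [tauMap_apply]
  have hsy : (bowtie k g h₁).symm t = t :=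
    (bowtie k g h₁).injective (by rw [Equiv.apply_symm_apply, hB1])
  rw [hsy]
  cases h : a t with
  | none => rfl
  | some w => simp [hB2 w]
end

section
/- Every semigroup automorphism σ of (IS_n, *) factors as σ = τ ∘' π, where τ = τ_(g,h₁,h₂) for some g ∈ S(A), h₁, h₂ ∈ S(Ā), and π is a bijection of IS_n satisfying π(a) ∼ a for all a ∈ IS_n (here ∘' denotes the composition 'apply π first, then τ'). -/
open Equiv

namespace AutFact
open PEquiv

variable {n k : ℕ}

lemma sandE_apply (n k : ℕ) (s : Fin n) :
    sandE n k s = if (s : ℕ) < k then some s else none := rfl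

lemma smul_apply (n k : ℕ) (x y : IS n) (t : Fin n) :
    smul n k x y t = ((x t).bind fun s => if (s : ℕ) < k then y s else none) := by
  show ((x t).bind (sandE n k)).bind y = _
  rcases x t with _ | s
  · rfl
  · show ((sandE n k) s).bind y = _
    rw [sandE_apply]; split_ifs with h <;> simp [h]

lemma single_app (a b t : Fin n) :
    PEquiv.single a b t = if t = a then some b else none := by
  rfl

lemma symm_eq_some_iff (x : IS n) {a b : Fin n} : x.symm b = some a ↔ x a = some b :=
  PEquiv.eq_some_iff x

lemma apply_inj (x : IS n) {a a' b : Fin n} (h : x a = some b) (h' : x a' = some b) : a = a' := by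
  have := (symm_eq_some_iff x).2 h
  have := (symm_eq_some_iff x).2 h'
  simp_all

end AutFact
namespace AutFact

/-- rank-one idempotent at `q` -/
def eps {n : ℕ} (q : Fin n) : IS n := PEquiv.single q q

lemma eps_app {n : ℕ} (q t : Fin n) : eps q t = if t = q then some q else none :=
  single_app q q t

lemma eps_ne_bot {n : ℕ} (q : Fin n) : eps q ≠ ⊥ := by
  intro h
  have := congrArg (fun z : IS n => z q) h
  simp [eps_app] at this

lemma bot_app {n : ℕ} (t : Fin n) : (⊥ : IS n) t = none := rfl

lemma smul_bot_left (n k : ℕ) (y : IS n) : smul n k ⊥ y = ⊥ := by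
  ext t; simp [smul_apply, bot_app]

lemma smul_bot_right (n k : ℕ) (x : IS n) : smul n k x ⊥ = ⊥ := by
  ext t; rw [smul_apply, bot_app]; rcases x t with _ | s <;> simp

lemma smul_eps_left_some {n k : ℕ} {q s : Fin n} (hq : (q : ℕ) < k) {x : IS n}
    (h : x q = some s) : smul n k (eps q) x = PEquiv.single q s := by
  ext t
  rw [smul_apply, eps_app, single_app]
  by_cases ht : t = q <;> simp [ht, hq, h]

lemma smul_eps_left_none {n k : ℕ} {q : Fin n} {x : IS n}
    (h : x q = none) : smul n k (eps q) x = ⊥ := by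
  ext t
  rw [smul_apply, eps_app, bot_app]
  by_cases ht : t = q <;> simp [ht, h]

lemma smul_eps_right_some {n k : ℕ} {q w : Fin n} (hq : (q : ℕ) < k) {x : IS n}
    (h : x.symm q = some w) : smul n k x (eps q) = PEquiv.single w q := by
  have hw : x w = some q := (symm_eq_some_iff x).1 h
  refine PEquiv.ext fun t => ?_
  rw [smul_apply, single_app]
  rcases hx : x t with _ | s
  · rw [Option.bind_none]
    have ht : t ≠ w := fun h' => by rw [h', hw] at hx; cases hx
    rw [if_neg ht]
  · rw [Option.bind_some, eps_app]
    by_cases hsq : s = q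
    · subst hsq
      have htw : t = w := apply_inj x hx hw
      rw [if_pos hq, if_pos rfl, if_pos htw]
    · have htw : t ≠ w := fun h' => hsq (by rw [h', hw] at hx; injection hx with h2; exact h2.symm)
      rw [if_neg htw]
      by_cases hs : (s : ℕ) < k
      · rw [if_pos hs, if_neg hsq]
      · rw [if_neg hs]

lemma smul_eps_right_none {n k : ℕ} {q : Fin n} {x : IS n}
    (h : x.symm q = none) : smul n k x (eps q) = ⊥ := by
  refine PEquiv.ext fun t => ?_
  rw [smul_apply, bot_app]
  rcases hx : x t with _ | s
  · rw [Option.bind_none]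
  · have hsq : s ≠ q := by
      intro hs
      rw [(symm_eq_some_iff x).2 (hs ▸ hx)] at h; cases h
    rw [Option.bind_some, eps_app]
    by_cases hs : (s : ℕ) < k
    · rw [if_pos hs, if_neg hsq]
    · rw [if_neg hs]

lemma idem_iff {n k : ℕ} {x : IS n} :
    smul n k x x = x ↔ ∀ t s, x t = some s → s = t ∧ (t : ℕ) < k := by
  constructor
  · intro h t s hts
    have ht := congrArg (fun z : IS n => z t) h
    rw [smul_apply, hts, Option.bind_some] at ht
    by_cases hs : (s : ℕ) < k
    · rw [if_pos hs] at ht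
      have hst : x s = some s := ht
      have : t = s := apply_inj x hts hst
      exact ⟨this.symm, this ▸ hs⟩
    · rw [if_neg hs] at ht; cases ht
  · intro h
    ext t
    rw [smul_apply]
    rcases hx : x t with _ | s
    · rfl
    · obtain ⟨rfl, htk⟩ := h t s hx
      simp [htk, hx]

lemma eps_idem {n k : ℕ} {q : Fin n} (hq : (q : ℕ) < k) :
    smul n k (eps q) (eps q) = eps q := by
  rw [idem_iff]
  intro t s h
  rw [eps_app] at h
  by_cases ht : t = q
  · subst ht; rw [if_pos rfl] at h; injection h with h; exact ⟨h.symm, hq⟩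
  · rw [if_neg ht] at h; cases h

end AutFact
namespace AutFact

/-- `σ` is a `⋆`-endomorphism. -/
def AutHom (n k : ℕ) (σ : Equiv.Perm (IS n)) : Prop :=
  ∀ x y : IS n, σ (smul n k x y) = smul n k (σ x) (σ y)

lemma AutHom.symm {n k : ℕ} {σ : Equiv.Perm (IS n)} (hσ : AutHom n k σ) :
    AutHom n k σ.symm := by
  intro x y
  apply σ.injective
  rw [Equiv.apply_symm_apply, hσ, Equiv.apply_symm_apply, Equiv.apply_symm_apply]

lemma AutHom.bot {n k : ℕ} {σ : Equiv.Perm (IS n)} (hσ : AutHom n k σ) : σ ⊥ = ⊥ := by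
  have h1 : σ (⊥ : IS n) = smul n k (σ ⊥) ⊥ := by
    have := hσ ⊥ (σ.symm ⊥)
    rwa [smul_bot_left, Equiv.apply_symm_apply] at this
  rw [h1, smul_bot_right]

/-- atoms of the idempotent order -/
def IsAtomS (n k : ℕ) (x : IS n) : Prop :=
  x ≠ ⊥ ∧ smul n k x x = x ∧
    ∀ y, smul n k y y = y → smul n k x y = ⊥ ∨ smul n k x y = x

lemma isAtomS_eps {n k : ℕ} {q : Fin n} (hq : (q : ℕ) < k) : IsAtomS n k (eps q) := by
  refine ⟨eps_ne_bot q, eps_idem hq, fun y hy => ?_⟩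
  rcases hyq : y q with _ | s
  · exact Or.inl (smul_eps_left_none hyq)
  · obtain ⟨rfl, -⟩ := (idem_iff.1 hy) q s hyq
    exact Or.inr (smul_eps_left_some hq hyq)

lemma isAtomS_iff {n k : ℕ} {x : IS n} :
    IsAtomS n k x ↔ ∃ q : Fin n, ∃ _ : (q : ℕ) < k, x = eps q := by
  constructor
  · rintro ⟨hne, hid, hmin⟩
    have hpt := idem_iff.1 hid
    have hex : ∃ t s, x t = some s := by
      by_contra hc
      push_neg at hc
      apply hne
      refine PEquiv.ext fun t => ?_
      rcases hx : x t with _ | s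
      · rfl
      · exact absurd hx (hc t s)
    obtain ⟨t, s, hts⟩ := hex
    obtain ⟨hst, htk⟩ := hpt t s hts
    rw [hst] at hts
    have hsymm : x.symm t = some t := (symm_eq_some_iff x).2 hts
    have hxe : smul n k x (eps t) = eps t := smul_eps_right_some htk hsymm
    rcases hmin (eps t) (eps_idem htk) with h | h
    · exact absurd (hxe ▸ h) (eps_ne_bot t)
    · exact ⟨t, htk, (hxe ▸ h).symm⟩
  · rintro ⟨q, hq, rfl⟩
    exact isAtomS_eps hq

lemma AutHom.atom {n k : ℕ} {σ : Equiv.Perm (IS n)} (hσ : AutHom n k σ) {x : IS n}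
    (h : IsAtomS n k x) : IsAtomS n k (σ x) := by
  obtain ⟨hne, hid, hmin⟩ := h
  refine ⟨fun hb => hne (σ.injective (hb.trans hσ.bot.symm)), ?_, fun y hy => ?_⟩
  · rw [← hσ, hid]
  · have hy' : smul n k (σ.symm y) (σ.symm y) = σ.symm y := by
      rw [← hσ.symm, hy]
    rcases hmin (σ.symm y) hy' with h | h
    · left
      have := hσ x (σ.symm y)
      rw [h, hσ.bot, Equiv.apply_symm_apply] at this
      exact this.symm
    · right
      have := hσ x (σ.symm y)
      rw [h, Equiv.apply_symm_apply] at this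
      exact this.symm

lemma eps_inj {n : ℕ} {p q : Fin n} (h : eps p = eps q) : p = q := by
  have := congrArg (fun z : IS n => z p) h
  simp only [eps_app, if_pos rfl] at this
  by_cases hpq : p = q
  · exact hpq
  · rw [if_neg hpq] at this; cases this

lemma single_inj {n : ℕ} {p q p' q' : Fin n} (h : PEquiv.single p q = PEquiv.single p' q') :
    p = p' ∧ q = q' := by
  have := congrArg (fun z : IS n => z p) h
  simp only [single_app, if_pos rfl] at this
  by_cases hpp : p = p'
  · subst hpp
    rw [if_pos rfl] at this
    injection this with this
    exact ⟨rfl, this⟩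
  · rw [if_neg hpp] at this; cases this

lemma smul_single_single {n k : ℕ} {b : Fin n} (a d : Fin n) (hb : (b : ℕ) < k) :
    smul n k (PEquiv.single a b) (PEquiv.single b d) = PEquiv.single a d := by
  refine PEquiv.ext fun t => ?_
  rw [smul_apply, single_app, single_app]
  by_cases ht : t = a
  · rw [if_pos ht, if_pos ht, Option.bind_some, if_pos hb, PEquiv.single_apply]
  · rw [if_neg ht, if_neg ht, Option.bind_none]

lemma right_ann_of_notA {n k : ℕ} {q s : Fin n} (hs : ¬ (s : ℕ) < k) (y : IS n) :
    smul n k (PEquiv.single q s) y = ⊥ := by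
  refine PEquiv.ext fun t => ?_
  rw [smul_apply, single_app, bot_app]
  by_cases ht : t = q
  · rw [if_pos ht, Option.bind_some, if_neg hs]
  · rw [if_neg ht, Option.bind_none]

lemma left_ann_of_notA {n k : ℕ} {q s : Fin n} (hs : ¬ (s : ℕ) < k) (y : IS n) :
    smul n k y (PEquiv.single s q) = ⊥ := by
  refine PEquiv.ext fun t => ?_
  rw [smul_apply, bot_app]
  rcases hy : y t with _ | u
  · rw [Option.bind_none]
  · rw [Option.bind_some]
    by_cases hu : (u : ℕ) < k
    · rw [if_pos hu, single_app, if_neg (fun h : u = s => hs (h ▸ hu))]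
    · rw [if_neg hu]

lemma AutHom.right_ann {n k : ℕ} {σ : Equiv.Perm (IS n)} (hσ : AutHom n k σ) {x : IS n}
    (h : ∀ y, smul n k x y = ⊥) (z : IS n) : smul n k (σ x) z = ⊥ := by
  have := hσ x (σ.symm z)
  rw [h, hσ.bot, Equiv.apply_symm_apply] at this
  exact this.symm

lemma AutHom.left_ann {n k : ℕ} {σ : Equiv.Perm (IS n)} (hσ : AutHom n k σ) {x : IS n}
    (h : ∀ y, smul n k y x = ⊥) (z : IS n) : smul n k z (σ x) = ⊥ := by
  have := hσ (σ.symm z) x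
  rw [h, hσ.bot, Equiv.apply_symm_apply] at this
  exact this.symm

lemma ne_bot_of_apply {n : ℕ} {x : IS n} {t s : Fin n} (h : x t = some s) : x ≠ ⊥ := by
  intro hb; rw [hb] at h; cases h

end AutFact
namespace AutFact

lemma single_ne_bot {n : ℕ} (p q : Fin n) : PEquiv.single p q ≠ ⊥ :=
  ne_bot_of_apply (PEquiv.single_apply p q)

lemma sigma_single_AA {n k : ℕ} {σ : Equiv.Perm (IS n)} (hσ : AutHom n k σ)
    {p q p' q' : Fin n} (hp : (p : ℕ) < k) (hq : (q : ℕ) < k)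
    (hp' : σ (eps p) = eps p') (hq' : σ (eps q) = eps q')
    (hp'k : (p' : ℕ) < k) (hq'k : (q' : ℕ) < k) :
    σ (PEquiv.single p q) = PEquiv.single p' q' := by
  have hXne : σ (PEquiv.single p q) ≠ ⊥ := fun hb =>
    single_ne_bot p q (σ.injective (hb.trans hσ.bot.symm))
  have h1 : smul n k (eps p) (PEquiv.single p q) = PEquiv.single p q :=
    smul_eps_left_some hp (PEquiv.single_apply p q)
  have h1' : σ (PEquiv.single p q) = smul n k (eps p') (σ (PEquiv.single p q)) := by
    conv_lhs => rw [← h1, hσ, hp']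
  obtain ⟨v, hv⟩ : ∃ v, σ (PEquiv.single p q) p' = some v := by
    rcases hX : σ (PEquiv.single p q) p' with _ | v
    · exact absurd (h1'.trans (smul_eps_left_none hX)) hXne
    · exact ⟨v, rfl⟩
  have hXv : σ (PEquiv.single p q) = PEquiv.single p' v := by
    rw [h1', smul_eps_left_some hp'k hv]
  have h2 : smul n k (PEquiv.single p q) (eps q) = PEquiv.single p q := by
    apply smul_eps_right_some hq
    rw [PEquiv.symm_single]; exact PEquiv.single_apply q p
  have h2' : σ (PEquiv.single p q) = smul n k (σ (PEquiv.single p q)) (eps q') := by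
    conv_lhs => rw [← h2, hσ, hq']
  by_cases hvq : v = q'
  · rw [hXv, hvq]
  · exfalso
    have hsymm : (PEquiv.single p' v).symm q' = none := by
      rw [PEquiv.symm_single, single_app, if_neg (Ne.symm hvq)]
    rw [hXv] at h2'
    rw [smul_eps_right_none hsymm] at h2'
    exact single_ne_bot p' v h2'

lemma sigma_single_A_notA {n k : ℕ} {σ : Equiv.Perm (IS n)} (hσ : AutHom n k σ)
    {q s q' : Fin n} (hq : (q : ℕ) < k) (hs : ¬ (s : ℕ) < k)
    (hq' : σ (eps q) = eps q') (hq'k : (q' : ℕ) < k) :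
    ∃ v : Fin n, ¬ (v : ℕ) < k ∧ σ (PEquiv.single q s) = PEquiv.single q' v := by
  have hXne : σ (PEquiv.single q s) ≠ ⊥ := fun hb =>
    single_ne_bot q s (σ.injective (hb.trans hσ.bot.symm))
  have h1 : smul n k (eps q) (PEquiv.single q s) = PEquiv.single q s :=
    smul_eps_left_some hq (PEquiv.single_apply q s)
  have h1' : σ (PEquiv.single q s) = smul n k (eps q') (σ (PEquiv.single q s)) := by
    conv_lhs => rw [← h1, hσ, hq']
  obtain ⟨v, hv⟩ : ∃ v, σ (PEquiv.single q s) q' = some v := by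
    rcases hX : σ (PEquiv.single q s) q' with _ | v
    · exact absurd (h1'.trans (smul_eps_left_none hX)) hXne
    · exact ⟨v, rfl⟩
  have hXv : σ (PEquiv.single q s) = PEquiv.single q' v := by
    rw [h1', smul_eps_left_some hq'k hv]
  refine ⟨v, fun hvk => ?_, hXv⟩
  have hann := hσ.right_ann (x := PEquiv.single q s) (fun y => right_ann_of_notA (q := q) hs y) (eps v)
  have : smul n k (σ (PEquiv.single q s)) (eps v) = PEquiv.single q' v := by
    apply smul_eps_right_some hvk
    rw [hXv, PEquiv.symm_single]; exact PEquiv.single_apply v q'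
  rw [hann] at this
  exact single_ne_bot q' v this.symm

lemma sigma_single_notA_A {n k : ℕ} {σ : Equiv.Perm (IS n)} (hσ : AutHom n k σ)
    {s q q' : Fin n} (hs : ¬ (s : ℕ) < k) (hq : (q : ℕ) < k)
    (hq' : σ (eps q) = eps q') (hq'k : (q' : ℕ) < k) :
    ∃ w : Fin n, ¬ (w : ℕ) < k ∧ σ (PEquiv.single s q) = PEquiv.single w q' := by
  have hXne : σ (PEquiv.single s q) ≠ ⊥ := fun hb =>
    single_ne_bot s q (σ.injective (hb.trans hσ.bot.symm))
  have h1 : smul n k (PEquiv.single s q) (eps q) = PEquiv.single s q := by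
    apply smul_eps_right_some hq
    rw [PEquiv.symm_single]; exact PEquiv.single_apply q s
  have h1' : σ (PEquiv.single s q) = smul n k (σ (PEquiv.single s q)) (eps q') := by
    conv_lhs => rw [← h1, hσ, hq']
  obtain ⟨w, hw⟩ : ∃ w, (σ (PEquiv.single s q)).symm q' = some w := by
    rcases hX : (σ (PEquiv.single s q)).symm q' with _ | w
    · exact absurd (h1'.trans (smul_eps_right_none hX)) hXne
    · exact ⟨w, rfl⟩
  have hXw : σ (PEquiv.single s q) = PEquiv.single w q' := by
    rw [h1', smul_eps_right_some hq'k hw]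
  refine ⟨w, fun hwk => ?_, hXw⟩
  have hann := hσ.left_ann (x := PEquiv.single s q) (fun y => left_ann_of_notA (q := q) hs y) (eps w)
  have : smul n k (eps w) (σ (PEquiv.single s q)) = PEquiv.single w q' := by
    apply smul_eps_left_some hwk
    rw [hXw]; exact PEquiv.single_apply w q'
  rw [hann] at this
  exact single_ne_bot w q' this.symm

end AutFact
namespace AutFact

section Bowtie

variable {n k : ℕ} (g : Equiv.Perm {x : Fin n // (x : ℕ) < k})
  (h : Equiv.Perm {x : Fin n // ¬ (x : ℕ) < k})

lemma bowtie_app_lt {t : Fin n} (ht : (t : ℕ) < k) :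
    bowtie k g h t = ↑(g ⟨t, ht⟩) :=
  Equiv.Perm.subtypeCongr.left_apply g h ht

lemma bowtie_app_not {t : Fin n} (ht : ¬ (t : ℕ) < k) :
    bowtie k g h t = ↑(h ⟨t, ht⟩) :=
  Equiv.Perm.subtypeCongr.right_apply g h ht

lemma bowtie_lt_iff (t : Fin n) :
    ((bowtie k g h t : Fin n) : ℕ) < k ↔ (t : ℕ) < k := by
  by_cases ht : (t : ℕ) < k
  · rw [bowtie_app_lt g h ht]
    exact iff_of_true (g ⟨t, ht⟩).2 ht
  · rw [bowtie_app_not g h ht]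
    exact iff_of_false (h ⟨t, ht⟩).2 ht

lemma bowtie_symm : (bowtie k g h).symm = bowtie k g.symm h.symm :=
  Equiv.Perm.subtypeCongr.symm g h

end Bowtie

lemma conj_apply {n : ℕ} (B₁ B₂ : Equiv.Perm (Fin n)) (a : IS n) (t : Fin n) :
    ((B₁.toPEquiv.trans a).trans B₂.toPEquiv) t = (a (B₁ t)).map B₂ := by
  show ((B₁.toPEquiv t).bind a).bind B₂.toPEquiv = _
  rw [Equiv.toPEquiv_apply, Option.bind_some]
  rcases a (B₁ t) with _ | u
  · rfl
  · rw [Option.bind_some, Option.map_some, Equiv.toPEquiv_apply]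

lemma tauMap_apply {n k : ℕ} (g : Equiv.Perm {x : Fin n // (x : ℕ) < k})
    (h₁ h₂ : Equiv.Perm {x : Fin n // ¬ (x : ℕ) < k}) (a : IS n) (t : Fin n) :
    tauMap k g h₁ h₂ a t = (a ((bowtie k g h₁).symm t)).map (bowtie k g h₂) :=
  conj_apply (bowtie k g h₁).symm (bowtie k g h₂) a t

/-- `tauMap` as a bijection of `IS n`. -/
def tauEquiv {n : ℕ} (k : ℕ) (g : Equiv.Perm {x : Fin n // (x : ℕ) < k})
    (h₁ h₂ : Equiv.Perm {x : Fin n // ¬ (x : ℕ) < k}) : Equiv.Perm (IS n) where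
  toFun := tauMap k g h₁ h₂
  invFun a := ((bowtie k g h₁).toPEquiv.trans a).trans (bowtie k g h₂).symm.toPEquiv
  left_inv a := by
    refine PEquiv.ext fun t => ?_
    rw [conj_apply, tauMap_apply]
    rw [Equiv.symm_apply_apply]
    rcases a t with _ | u
    · rfl
    · simp
  right_inv a := by
    refine PEquiv.ext fun t => ?_
    rw [tauMap_apply, conj_apply]
    rw [Equiv.apply_symm_apply]
    rcases a t with _ | u
    · rfl
    · simp

lemma tauEquiv_symm_apply {n k : ℕ} (g : Equiv.Perm {x : Fin n // (x : ℕ) < k})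
    (h₁ h₂ : Equiv.Perm {x : Fin n // ¬ (x : ℕ) < k}) (a : IS n) (t : Fin n) :
    (tauEquiv k g h₁ h₂).symm a t = (a (bowtie k g h₁ t)).map (bowtie k g h₂).symm :=
  conj_apply (bowtie k g h₁) (bowtie k g h₂).symm a t

lemma tauEquiv_symm_autHom {n k : ℕ} (g : Equiv.Perm {x : Fin n // (x : ℕ) < k})
    (h₁ h₂ : Equiv.Perm {x : Fin n // ¬ (x : ℕ) < k}) :
    AutHom n k (tauEquiv k g h₁ h₂).symm := by
  intro u v
  refine PEquiv.ext fun t => ?_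
  rw [tauEquiv_symm_apply, smul_apply, smul_apply, tauEquiv_symm_apply]
  rcases hu : u (bowtie k g h₁ t) with _ | s
  · rw [Option.bind_none, Option.map_none, Option.bind_none]
  · rw [Option.bind_some, Option.map_some, Option.bind_some]
    by_cases hs : (s : ℕ) < k
    · have hBs : ((((bowtie k g h₂).symm s : Fin n)) : ℕ) < k := by
        rw [bowtie_symm]
        exact (bowtie_lt_iff g.symm h₂.symm s).2 hs
      rw [if_pos hs, if_pos hBs, tauEquiv_symm_apply]
      have hB1 : bowtie k g h₁ ((bowtie k g h₂).symm s) = s := by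
        rw [bowtie_symm, bowtie_app_lt g.symm h₂.symm hs]
        rw [bowtie_app_lt g h₁ (g.symm ⟨s, hs⟩).2]
        simp
      rw [hB1]
    · have hBs : ¬ ((((bowtie k g h₂).symm s : Fin n)) : ℕ) < k := by
        rw [bowtie_symm]
        exact fun hc => hs ((bowtie_lt_iff g.symm h₂.symm s).1 hc)
      rw [if_neg hs, if_neg hBs, Option.map_none]

end AutFact
namespace AutFact

section Fix

variable {n k : ℕ} {ρ : Equiv.Perm (IS n)} (hρ : AutHom n k ρ)
  (hsing : ∀ p q : Fin n, ρ (PEquiv.single p q) = PEquiv.single p q)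

include hρ hsing

lemma fix_eps (q : Fin n) : ρ (eps q) = eps q := hsing q q

lemma fix_apply_lt (x : IS n) {q : Fin n} (hq : (q : ℕ) < k) : ρ x q = x q := by
  rcases hxq : x q with _ | s
  · have h0 := hρ (eps q) x
    rw [smul_eps_left_none hxq, hρ.bot, fix_eps hρ hsing] at h0
    rcases h : ρ x q with _ | s
    · rfl
    · rw [smul_eps_left_some hq h] at h0
      exact absurd h0.symm (single_ne_bot q s)
  · have h0 := hρ (eps q) x
    rw [smul_eps_left_some hq hxq, fix_eps hρ hsing, hsing] at h0
    rcases h : ρ x q with _ | s'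
    · rw [smul_eps_left_none h] at h0
      exact absurd h0 (single_ne_bot q s)
    · rw [smul_eps_left_some hq h] at h0
      rw [(single_inj h0).2]

lemma fix_symm_lt (x : IS n) {q : Fin n} (hq : (q : ℕ) < k) :
    (ρ x).symm q = x.symm q := by
  rcases hxq : x.symm q with _ | w
  · have h0 := hρ x (eps q)
    rw [smul_eps_right_none hxq, hρ.bot, fix_eps hρ hsing] at h0
    rcases h : (ρ x).symm q with _ | w
    · rfl
    · rw [smul_eps_right_some hq h] at h0
      exact absurd h0.symm (single_ne_bot w q)
  · have h0 := hρ x (eps q)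
    rw [smul_eps_right_some hq hxq, fix_eps hρ hsing, hsing] at h0
    rcases h : (ρ x).symm q with _ | w'
    · rw [smul_eps_right_none h] at h0
      exact absurd h0 (single_ne_bot w q)
    · rw [smul_eps_right_some hq h] at h0
      rw [(single_inj h0).1]

lemma fix_decomp {a : IS n} (hd : Decomp n k a) : ρ a = a := by
  obtain ⟨b, c, rfl⟩ := hd
  rw [hρ]
  refine PEquiv.ext fun t => ?_
  rw [smul_apply, smul_apply]
  rcases hbt : b t with _ | s
  · rcases hrt : (ρ b) t with _ | u
    · rw [Option.bind_none, Option.bind_none]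
    · by_cases hu : (u : ℕ) < k
      · exfalso
        have h1 : (ρ b).symm u = some t := (symm_eq_some_iff _).2 hrt
        rw [fix_symm_lt hρ hsing b hu] at h1
        rw [(symm_eq_some_iff b).1 h1] at hbt
        cases hbt
      · rw [Option.bind_none, Option.bind_some, if_neg hu]
  · by_cases hs : (s : ℕ) < k
    · have h1 : b.symm s = some t := (symm_eq_some_iff b).2 hbt
      have h2 : (ρ b).symm s = some t := by
        rw [fix_symm_lt hρ hsing b hs]; exact h1
      rw [(symm_eq_some_iff (ρ b)).1 h2, Option.bind_some, Option.bind_some,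
        if_pos hs, if_pos hs, fix_apply_lt hρ hsing c hs]
    · rw [Option.bind_some, if_neg hs]
      rcases hrt : (ρ b) t with _ | u
      · rw [Option.bind_none]
      · by_cases hu : (u : ℕ) < k
        · exfalso
          have h1 : (ρ b).symm u = some t := (symm_eq_some_iff _).2 hrt
          rw [fix_symm_lt hρ hsing b hu] at h1
          have h2 := (symm_eq_some_iff b).1 h1
          rw [hbt] at h2
          injection h2 with h2
          exact hs (h2 ▸ hu)
        · rw [Option.bind_some, if_neg hu]

end Fix

lemma decomp_transport {n k : ℕ} {ρ : Equiv.Perm (IS n)} (hρs : AutHom n k ρ.symm)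
    {a : IS n} (h : Decomp n k (ρ a)) : Decomp n k a := by
  obtain ⟨b, c, hbc⟩ := h
  exact ⟨ρ.symm b, ρ.symm c, by rw [← hρs, hbc, Equiv.symm_apply_apply]⟩

end AutFact

/-- every automorphism `σ` of `(IS_n, *)` factors as
`σ = τ_(g,h₁,h₂) ∘ π` where `π` is a bijection with `π a ∼ a` for all `a`. -/
theorem aut_factorization (n k : ℕ) (hk : 1 ≤ k) (hkn : k ≤ n)
    (σ : Equiv.Perm (IS n))
    (hσ : ∀ x y : IS n, σ (smul n k x y) = smul n k (σ x) (σ y)) :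
    ∃ (g : Perm {x : Fin n // (x : ℕ) < k})
      (h₁ h₂ : Perm {x : Fin n // ¬ (x : ℕ) < k})
      (π : Equiv.Perm (IS n)),
        (∀ a, SimRel n k (π a) a) ∧
        ∀ a : IS n, σ a = tauMap k g h₁ h₂ (π a) := by
  classical
  open AutFact in
  have hσA : AutFact.AutHom n k σ := hσ
  have hn : 0 < n := lt_of_lt_of_le hk hkn
  -- the permutation g on A, from atoms
  have H1 : ∀ q : {x : Fin n // (x : ℕ) < k}, ∃ p : {x : Fin n // (x : ℕ) < k},
      σ (AutFact.eps (q : Fin n)) = AutFact.eps (p : Fin n) := by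
    intro q
    obtain ⟨p, hp, hep⟩ := AutFact.isAtomS_iff.1 (hσA.atom (AutFact.isAtomS_eps q.2))
    exact ⟨⟨p, hp⟩, hep⟩
  choose gf hgf using H1
  have gfinj : Function.Injective gf := by
    intro a b hab
    have h1 : σ (AutFact.eps (a : Fin n)) = σ (AutFact.eps (b : Fin n)) := by
      rw [hgf, hgf, hab]
    exact Subtype.ext (AutFact.eps_inj (σ.injective h1))
  let g : Perm {x : Fin n // (x : ℕ) < k} :=
    Equiv.ofBijective gf (Finite.injective_iff_bijective.1 gfinj)
  -- σ on A→A singles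
  have hAA : ∀ p q : {x : Fin n // (x : ℕ) < k},
      σ (PEquiv.single (p : Fin n) (q : Fin n)) =
        PEquiv.single ((gf p : _) : Fin n) ((gf q : _) : Fin n) := by
    intro p q
    exact AutFact.sigma_single_AA hσA p.2 q.2 (hgf p) (hgf q) (gf p).2 (gf q).2
  -- base point of A
  let a₀ : {x : Fin n // (x : ℕ) < k} := ⟨⟨0, hn⟩, hk⟩
  -- σ on A→Ā singles
  have H2 : ∀ s : {x : Fin n // ¬ (x : ℕ) < k}, ∃ v : {x : Fin n // ¬ (x : ℕ) < k},
      σ (PEquiv.single (a₀ : Fin n) (s : Fin n)) =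
        PEquiv.single ((gf a₀ : _) : Fin n) (v : Fin n) := by
    intro s
    obtain ⟨v, hv, h⟩ := AutFact.sigma_single_A_notA hσA a₀.2 s.2 (hgf a₀) (gf a₀).2
    exact ⟨⟨v, hv⟩, h⟩
  choose h2f hh2f using H2
  have h2finj : Function.Injective h2f := by
    intro a b hab
    have h1 : σ (PEquiv.single (a₀ : Fin n) (a : Fin n)) =
        σ (PEquiv.single (a₀ : Fin n) (b : Fin n)) := by
      rw [hh2f, hh2f, hab]
    exact Subtype.ext (AutFact.single_inj (σ.injective h1)).2
  let h₂ : Perm {x : Fin n // ¬ (x : ℕ) < k} :=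
    Equiv.ofBijective h2f (Finite.injective_iff_bijective.1 h2finj)
  -- σ on Ā→A singles
  have H3 : ∀ s : {x : Fin n // ¬ (x : ℕ) < k}, ∃ w : {x : Fin n // ¬ (x : ℕ) < k},
      σ (PEquiv.single (s : Fin n) (a₀ : Fin n)) =
        PEquiv.single (w : Fin n) ((gf a₀ : _) : Fin n) := by
    intro s
    obtain ⟨w, hw, h⟩ := AutFact.sigma_single_notA_A hσA s.2 a₀.2 (hgf a₀) (gf a₀).2
    exact ⟨⟨w, hw⟩, h⟩
  choose h1f hh1f using H3
  have h1finj : Function.Injective h1f := by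
    intro a b hab
    have h1 : σ (PEquiv.single (a : Fin n) (a₀ : Fin n)) =
        σ (PEquiv.single (b : Fin n) (a₀ : Fin n)) := by
      rw [hh1f, hh1f, hab]
    exact Subtype.ext (AutFact.single_inj (σ.injective h1)).1
  let h₁ : Perm {x : Fin n // ¬ (x : ℕ) < k} :=
    Equiv.ofBijective h1f (Finite.injective_iff_bijective.1 h1finj)
  -- σ on general A→Ā singles
  have hA2 : ∀ (q : {x : Fin n // (x : ℕ) < k}) (s : {x : Fin n // ¬ (x : ℕ) < k}),
      σ (PEquiv.single (q : Fin n) (s : Fin n)) =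
        PEquiv.single ((gf q : _) : Fin n) ((h2f s : _) : Fin n) := by
    intro q s
    have hd : PEquiv.single (q : Fin n) (s : Fin n) =
        smul n k (PEquiv.single (q : Fin n) (a₀ : Fin n))
          (PEquiv.single (a₀ : Fin n) (s : Fin n)) :=
      (AutFact.smul_single_single _ _ a₀.2).symm
    rw [hd, hσ, hAA q a₀, hh2f s, AutFact.smul_single_single _ _ (gf a₀).2]
  -- σ on general Ā→A singles
  have hN2 : ∀ (s : {x : Fin n // ¬ (x : ℕ) < k}) (q : {x : Fin n // (x : ℕ) < k}),
      σ (PEquiv.single (s : Fin n) (q : Fin n)) =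
        PEquiv.single ((h1f s : _) : Fin n) ((gf q : _) : Fin n) := by
    intro s q
    have hd : PEquiv.single (s : Fin n) (q : Fin n) =
        smul n k (PEquiv.single (s : Fin n) (a₀ : Fin n))
          (PEquiv.single (a₀ : Fin n) (q : Fin n)) :=
      (AutFact.smul_single_single _ _ a₀.2).symm
    rw [hd, hσ, hh1f s, hAA a₀ q, AutFact.smul_single_single _ _ (gf a₀).2]
  -- σ on Ā→Ā singles
  have hNN : ∀ (s s' : {x : Fin n // ¬ (x : ℕ) < k}),
      σ (PEquiv.single (s : Fin n) (s' : Fin n)) =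
        PEquiv.single ((h1f s : _) : Fin n) ((h2f s' : _) : Fin n) := by
    intro s s'
    have hd : PEquiv.single (s : Fin n) (s' : Fin n) =
        smul n k (PEquiv.single (s : Fin n) (a₀ : Fin n))
          (PEquiv.single (a₀ : Fin n) (s' : Fin n)) :=
      (AutFact.smul_single_single _ _ a₀.2).symm
    rw [hd, hσ, hh1f s, hh2f s', AutFact.smul_single_single _ _ (gf a₀).2]
  -- unified form
  have hBall : ∀ p q : Fin n, σ (PEquiv.single p q) =
      PEquiv.single (bowtie k g h₁ p) (bowtie k g h₂ q) := by
    intro p q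
    by_cases hp : (p : ℕ) < k <;> by_cases hq : (q : ℕ) < k
    · rw [AutFact.bowtie_app_lt g h₁ hp, AutFact.bowtie_app_lt g h₂ hq]
      exact hAA ⟨p, hp⟩ ⟨q, hq⟩
    · rw [AutFact.bowtie_app_lt g h₁ hp, AutFact.bowtie_app_not g h₂ hq]
      exact hA2 ⟨p, hp⟩ ⟨q, hq⟩
    · rw [AutFact.bowtie_app_not g h₁ hp, AutFact.bowtie_app_lt g h₂ hq]
      exact hN2 ⟨p, hp⟩ ⟨q, hq⟩
    · rw [AutFact.bowtie_app_not g h₁ hp, AutFact.bowtie_app_not g h₂ hq]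
      exact hNN ⟨p, hp⟩ ⟨q, hq⟩
  -- τ as an equivalence and π
  set T : Equiv.Perm (IS n) := AutFact.tauEquiv k g h₁ h₂ with hT
  have htau_single : ∀ p q : Fin n, T (PEquiv.single p q) =
      PEquiv.single (bowtie k g h₁ p) (bowtie k g h₂ q) := by
    intro p q
    refine PEquiv.ext fun t => ?_
    rw [show (T (PEquiv.single p q)) t = tauMap k g h₁ h₂ (PEquiv.single p q) t from rfl]
    rw [AutFact.tauMap_apply, AutFact.single_app, AutFact.single_app]
    by_cases ht : (bowtie k g h₁).symm t = p
    · rw [if_pos ht, if_pos (by rw [← ht, Equiv.apply_symm_apply]), Option.map_some]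
    · rw [if_neg ht, if_neg (fun hc => ht (by rw [hc, Equiv.symm_apply_apply])),
        Option.map_none]
  set π : Equiv.Perm (IS n) := σ.trans T.symm with hπdef
  have hπapp : ∀ a : IS n, π a = T.symm (σ a) := fun a => rfl
  have hπA : AutFact.AutHom n k π := by
    intro x y
    rw [hπapp, hπapp, hπapp, hσ]
    exact AutFact.tauEquiv_symm_autHom g h₁ h₂ (σ x) (σ y)
  have hπsing : ∀ p q : Fin n, π (PEquiv.single p q) = PEquiv.single p q := by
    intro p q
    rw [hπapp, hBall, ← htau_single, Equiv.symm_apply_apply]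
  have hπsymmA : AutFact.AutHom n k π.symm := hπA.symm
  refine ⟨g, h₁, h₂, π, fun a => ?_, fun a => ?_⟩
  · by_cases hd : Decomp n k a
    · exact Or.inr ⟨Or.inr hd, AutFact.fix_decomp hπA hπsing hd⟩
    · left
      have hπd : ¬ Decomp n k (π a) := fun hc => hd (AutFact.decomp_transport hπsymmA hc)
      have hval : ∀ x : Fin n, (x : ℕ) < k → π a x = a x :=
        fun x hx => AutFact.fix_apply_lt hπA hπsing a hx
      have hsym : ∀ y : Fin n, (y : ℕ) < k → (π a).symm y = a.symm y :=
        fun y hy => AutFact.fix_symm_lt hπA hπsing a hy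
      have hcore : ∀ x y : Fin n, (y : ℕ) < k → ((π a) x = some y ↔ a x = some y) := by
        intro x y hy
        rw [← AutFact.symm_eq_some_iff (π a), ← AutFact.symm_eq_some_iff a, hsym y hy]
      have hM1 : M1 n k (π a) = M1 n k a := by
        ext x
        simp only [M1, SetA, Set.mem_setOf_eq]
        constructor
        · rintro ⟨hx, y, hy, hxy⟩
          rw [hval x hx] at hxy
          exact ⟨hx, y, hy, hxy⟩
        · rintro ⟨hx, y, hy, hxy⟩
          exact ⟨hx, y, hy, by rw [hval x hx]; exact hxy⟩
      have hM2 : M2 n k (π a) = M2 n k a := by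
        ext x
        simp only [M2, SetA, Set.mem_setOf_eq]
        constructor
        · rintro ⟨hx, y, hy, hxy⟩
          rw [hval x hx] at hxy
          exact ⟨hx, y, hy, hxy⟩
        · rintro ⟨hx, y, hy, hxy⟩
          exact ⟨hx, y, hy, by rw [hval x hx]; exact hxy⟩
      have hM3 : M3 n k (π a) = M3 n k a := by
        ext x
        simp only [M3, SetA, Set.mem_setOf_eq]
        constructor
        · rintro ⟨hx, y, hy, hxy⟩
          exact ⟨hx, y, hy, (hcore x y hy).1 hxy⟩
        · rintro ⟨hx, y, hy, hxy⟩
          exact ⟨hx, y, hy, (hcore x y hy).2 hxy⟩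
      refine ⟨hπd, hd, hM1, hM2, hM3, fun x hx => ?_⟩
      rcases hx with hx | hx
      · rcases hx with hx | hx
        · exact hval x hx.1
        · exact hval x hx.1
      · obtain ⟨-, y, hy, hxy⟩ := hx
        rw [hxy, (hcore x y hy).1 hxy]
  · rw [hπapp]
    exact (Equiv.apply_symm_apply T (σ a)).symm
end

section
/- Let σ be a semigroup automorphism of (IS_n, *). Then there exist g ∈ S(A) and h₁, h₂ ∈ S(Ā) such that for all s, t ∈ N, σ maps the rank-one element [s ↦ t] (the partial transformation with domain {s} sending s to t) to the rank-one element [(g⋈h₁)(s) ↦ (g⋈h₂)(t)]. -/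
open Equiv

section Aux
open PEquiv

variable {n k : ℕ}

lemma mem_sandE {i j : Fin n} : j ∈ sandE n k i ↔ (i:ℕ) < k ∧ j = i := by
  show j ∈ (if (i : ℕ) < k then some i else none) ↔ _
  split_ifs with h <;> simp [h, eq_comm]

lemma mem_smul {x y : IS n} {a c : Fin n} :
    c ∈ smul n k x y a ↔ ∃ b, b ∈ x a ∧ (b:ℕ) < k ∧ c ∈ y b := by
  simp only [smul, PEquiv.mem_trans, mem_sandE]
  constructor
  · rintro ⟨b, ⟨b', hb', hlt, h⟩, hc⟩
    subst h
    exact ⟨_, hb', hlt, hc⟩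
  · rintro ⟨b, hb, hlt, hc⟩
    exact ⟨b, ⟨b, hb, hlt, rfl⟩, hc⟩

lemma IS.ext_mem {x y : IS n} (h : ∀ a b, b ∈ x a ↔ b ∈ y a) : x = y :=
  PEquiv.ext fun a => Option.ext fun b => h a b

lemma smul_bot (x : IS n) : smul n k x ⊥ = ⊥ := trans_bot _

lemma bot_smul (x : IS n) : smul n k ⊥ x = ⊥ := by
  unfold smul; rw [bot_trans, bot_trans]

lemma single_ne_bot {a b : Fin n} : (single a b : IS n) ≠ ⊥ := by
  intro h
  have hb : b ∈ (⊥ : IS n) a := by rw [← h]; exact mem_single a b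
  simp at hb

lemma single_eq_single {a b c d : Fin n} (h : (single a b : IS n) = single c d) :
    a = c ∧ b = d := by
  have h1 : b ∈ (single c d : IS n) a := h ▸ mem_single a b
  rwa [mem_single_iff] at h1

lemma exists_mem_of_ne_bot {x : IS n} (hx : x ≠ ⊥) : ∃ a b, b ∈ x a := by
  by_contra h
  push_neg at h
  exact hx (PEquiv.ext fun a => Option.eq_none_iff_forall_not_mem.mpr (h a))

lemma smul_single_single {s t u v : Fin n} (ht : (t:ℕ) < k) (hu : u = t) :
    smul n k (single s t) (single u v) = single s v := by
  subst hu
  unfold smul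
  rw [single_trans_of_mem s (mem_sandE.mpr ⟨ht, rfl⟩), single_trans_single]

lemma smul_single_single_of_not_lt {s t u v : Fin n} (ht : ¬ (t:ℕ) < k) :
    smul n k (single s t) (single u v) = ⊥ := by
  unfold smul
  rw [single_trans_of_eq_none, bot_trans]
  show (if (t : ℕ) < k then some t else none) = none
  simp [ht]

lemma smul_single_single_of_ne {s t u v : Fin n} (hu : u ≠ t) :
    smul n k (single s t) (single u v) = ⊥ := by
  by_cases ht : (t:ℕ) < k
  · unfold smul
    rw [single_trans_of_mem s (mem_sandE.mpr ⟨ht, rfl⟩), single_trans_single_of_ne (Ne.symm hu)]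
  · exact smul_single_single_of_not_lt ht

lemma smul_single_id_left {a t : Fin n} {x : IS n} (ha : (a:ℕ) < k) (ht : t ∈ x a) :
    smul n k (single a a) x = single a t := by
  unfold smul
  rw [single_trans_of_mem a (mem_sandE.mpr ⟨ha, rfl⟩), single_trans_of_mem a ht]

lemma sandE_symm : (sandE n k).symm = sandE n k := rfl

lemma smul_symm (x y : IS n) : (smul n k x y).symm = smul n k y.symm x.symm := by
  unfold smul
  rw [symm_trans_rev, symm_trans_rev, sandE_symm, PEquiv.trans_assoc]


lemma single_min {a t : Fin n} (ha : (a:ℕ) < k) (f : IS n) (hf : smul n k f f = f) :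
    smul n k f (single a t) = ⊥ ∨ smul n k f (single a t) = single a t := by
  rcases hfa : f.symm a with _ | u
  · left
    apply IS.ext_mem
    intro b c
    simp only [bot_apply, Option.not_mem_none, iff_false]
    intro hc
    rw [mem_smul] at hc
    obtain ⟨b', hb', _, hc⟩ := hc
    rw [mem_single_iff] at hc
    obtain ⟨rfl, rfl⟩ := hc
    rw [← PEquiv.mem_iff_mem] at hb'
    rw [hb'] at hfa
    exact Option.some_ne_none _ hfa
  · -- a ∈ f u
    have hfu : a ∈ f u := (f.eq_some_iff).mp hfa
    have haa : a ∈ f a := by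
      have h2 : a ∈ smul n k f f u := by rw [hf]; exact hfu
      rw [mem_smul] at h2
      obtain ⟨b', hb', _, hab⟩ := h2
      have : b' = a := Option.some_injective _ (hb'.symm.trans hfu)
      rwa [this] at hab
    right
    apply IS.ext_mem
    intro b c
    rw [mem_smul, mem_single_iff]
    constructor
    · rintro ⟨b', hb', _, hc⟩
      rw [mem_single_iff] at hc
      obtain ⟨rfl, rfl⟩ := hc
      exact ⟨f.inj hb' haa, rfl⟩
    · rintro ⟨rfl, rfl⟩
      exact ⟨_, haa, ha, mem_single _ _⟩

lemma left_char {x : IS n} (hx : x ≠ ⊥) (f : IS n) (hfx : smul n k f x = x)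
    (hmin : ∀ f', smul n k f' f' = f' → smul n k f' x = ⊥ ∨ smul n k f' x = x) :
    ∃ a t : Fin n, (a:ℕ) < k ∧ x = single a t := by
  obtain ⟨a, t, hat⟩ := exists_mem_of_ne_bot hx
  have ha : (a:ℕ) < k := by
    have h1 : t ∈ smul n k f x a := by rw [hfx]; exact hat
    rw [mem_smul] at h1
    obtain ⟨b', hb', hlt, ht'⟩ := h1
    rwa [x.inj ht' hat] at hlt
  have hidem : smul n k (single a a : IS n) (single a a) = single a a :=
    smul_single_single ha rfl
  have hfx2 : smul n k (single a a : IS n) x = single a t := smul_single_id_left ha hat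
  rcases hmin (single a a) hidem with h | h
  · exact absurd (hfx2 ▸ h) single_ne_bot
  · exact ⟨a, t, ha, (hfx2 ▸ h).symm⟩

variable (σ : Equiv.Perm (IS n)) (hσ : ∀ x y : IS n, σ (smul n k x y) = smul n k (σ x) (σ y))

include hσ

lemma sigma_bot : σ ⊥ = ⊥ := by
  have h := hσ ⊥ (σ.symm ⊥)
  rw [bot_smul, Equiv.apply_symm_apply, smul_bot] at h
  exact h

lemma sigma_inv_aut : ∀ x y : IS n, σ.symm (smul n k x y) = smul n k (σ.symm x) (σ.symm y) := by
  intro x y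
  apply σ.injective
  rw [Equiv.apply_symm_apply, hσ, Equiv.apply_symm_apply, Equiv.apply_symm_apply]

lemma sigma_single_left {a : Fin n} (ha : (a:ℕ) < k) (t : Fin n) :
    ∃ a' t' : Fin n, (a':ℕ) < k ∧ σ (PEquiv.single a t) = PEquiv.single a' t' := by
  refine left_char ?_ (σ (single a a)) ?_ ?_
  · intro h
    have h2 : σ (single a t) = σ ⊥ := by rw [h, sigma_bot σ hσ]
    exact single_ne_bot (σ.injective h2)
  · rw [← hσ, smul_single_single ha rfl]
  · intro f' hf'
    have hf0 : smul n k (σ.symm f') (σ.symm f') = σ.symm f' := by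
      rw [← sigma_inv_aut σ hσ, hf']
    rcases single_min ha (σ.symm f') hf0 with h | h
    · left
      have := congrArg σ h
      rwa [hσ, Equiv.apply_symm_apply, sigma_bot σ hσ] at this
    · right
      have := congrArg σ h
      rwa [hσ, Equiv.apply_symm_apply] at this

lemma sigma_single_right {b : Fin n} (hb : (b:ℕ) < k) (s : Fin n) :
    ∃ s' b' : Fin n, (b':ℕ) < k ∧ σ (PEquiv.single s b) = PEquiv.single s' b' := by
  classical
  let σ' : Equiv.Perm (IS n) :=
    { toFun := fun x => (σ x.symm).symm
      invFun := fun x => (σ.symm x.symm).symm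
      left_inv := fun x => by simp
      right_inv := fun x => by simp }
  have hσ' : ∀ x y : IS n, σ' (smul n k x y) = smul n k (σ' x) (σ' y) := by
    intro x y
    show (σ (smul n k x y).symm).symm = smul n k (σ x.symm).symm (σ y.symm).symm
    rw [smul_symm, hσ, smul_symm]
  obtain ⟨b', s', hb', hx⟩ := sigma_single_left σ' hσ' hb s
  refine ⟨s', b', hb', ?_⟩
  have h0 : (σ ((single b s : IS n).symm)).symm = single b' s' := hx
  rw [symm_single] at h0
  have h1 := congrArg PEquiv.symm h0
  rwa [PEquiv.symm_symm, symm_single] at h1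

omit hσ in
lemma left_annihilate {s v : Fin n} (hs : ¬ (s:ℕ) < k) (y : IS n) :
    smul n k y (single s v) = ⊥ := by
  apply IS.ext_mem
  intro b c
  simp only [bot_apply, Option.not_mem_none, iff_false]
  intro hc
  rw [mem_smul] at hc
  obtain ⟨b', _, hlt, hc⟩ := hc
  rw [mem_single_iff] at hc
  exact hs (hc.1 ▸ hlt)

omit hσ in
lemma right_annihilate {u t : Fin n} (ht : ¬ (t:ℕ) < k) (y : IS n) :
    smul n k (single u t) y = ⊥ := by
  apply IS.ext_mem
  intro b c
  simp only [bot_apply, Option.not_mem_none, iff_false]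
  intro hc
  rw [mem_smul] at hc
  obtain ⟨b', hb', hlt, _⟩ := hc
  rw [mem_single_iff] at hb'
  exact ht (hb'.2 ▸ hlt)

end Aux

/-- every automorphism `σ` of `(IS_n, *)` acts on rank-one elements
as `[s ↦ t] ↦ [(g⋈h₁)(s) ↦ (g⋈h₂)(t)]` for suitable `g ∈ S(A)`, `h₁, h₂ ∈ S(Ā)`. -/
theorem aut_on_rank_one (n k : ℕ) (hk : 1 ≤ k) (hkn : k ≤ n)
    (σ : Equiv.Perm (IS n))
    (hσ : ∀ x y : IS n, σ (smul n k x y) = smul n k (σ x) (σ y)) :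
    ∃ (g : Perm {x : Fin n // (x : ℕ) < k})
      (h₁ h₂ : Perm {x : Fin n // ¬ (x : ℕ) < k}),
      ∀ s t : Fin n, σ (PEquiv.single s t) =
        PEquiv.single (bowtie k g h₁ s) (bowtie k g h₂ t) := by
  have hn : 0 < n := lt_of_lt_of_le hk hkn
  set a₀ : Fin n := ⟨0, hn⟩ with ha₀def
  have ha₀ : (a₀ : ℕ) < k := hk
  -- Step A : the permutation induced on idempotent atoms
  have key : ∀ a : {x : Fin n // (x:ℕ) < k}, ∃ a' : {x : Fin n // (x:ℕ) < k},
      σ (PEquiv.single a.1 a.1) = PEquiv.single a'.1 a'.1 := by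
    intro a
    obtain ⟨a', t', ha', hx⟩ := sigma_single_left σ hσ a.2 a.1
    have hidem : smul n k (PEquiv.single a.1 a.1 : IS n) (PEquiv.single a.1 a.1) = PEquiv.single a.1 a.1 :=
      smul_single_single a.2 rfl
    have h2 : smul n k (σ (PEquiv.single a.1 a.1)) (σ (PEquiv.single a.1 a.1)) = σ (PEquiv.single a.1 a.1) := by
      rw [← hσ, hidem]
    rw [hx] at h2
    by_cases hlt : (t' : ℕ) < k
    · by_cases heq : a' = t'
      · exact ⟨⟨a', ha'⟩, by rw [hx, ← heq]⟩
      · exfalso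
        rw [smul_single_single_of_ne heq] at h2
        exact single_ne_bot h2.symm
    · exfalso
      rw [smul_single_single_of_not_lt hlt] at h2
      exact single_ne_bot h2.symm
  choose G hG using key
  have hGinj : Function.Injective G := by
    intro a b hab
    have h1 : σ (PEquiv.single a.1 a.1) = σ (PEquiv.single b.1 b.1) := by rw [hG a, hG b, hab]
    exact Subtype.ext (single_eq_single (σ.injective h1)).1
  -- B1 : domain pinning for s ∈ A
  have B1 : ∀ (s : Fin n) (hs : (s:ℕ) < k) (t : Fin n),
      ∃ t' : Fin n, σ (PEquiv.single s t) = PEquiv.single (G ⟨s, hs⟩).1 t' := by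
    intro s hs t
    obtain ⟨a', t', ha', hx⟩ := sigma_single_left σ hσ hs t
    have h1 : smul n k (PEquiv.single s s : IS n) (PEquiv.single s t) = PEquiv.single s t := smul_single_single hs rfl
    have h2 : smul n k (σ (PEquiv.single s s)) (σ (PEquiv.single s t)) = σ (PEquiv.single s t) := by rw [← hσ, h1]
    rw [hG ⟨s, hs⟩, hx] at h2
    by_cases heq : a' = (G ⟨s, hs⟩).1
    · exact ⟨t', by rw [hx, heq]⟩
    · exfalso
      rw [smul_single_single_of_ne heq] at h2
      exact single_ne_bot h2.symm
  -- B2 : image pinning for t ∈ A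
  have B2 : ∀ (t : Fin n) (ht : (t:ℕ) < k) (s : Fin n),
      ∃ s' : Fin n, σ (PEquiv.single s t) = PEquiv.single s' (G ⟨t, ht⟩).1 := by
    intro t ht s
    obtain ⟨s', b', hb', hx⟩ := sigma_single_right σ hσ ht s
    have h1 : smul n k (PEquiv.single s t : IS n) (PEquiv.single t t) = PEquiv.single s t := smul_single_single ht rfl
    have h2 : smul n k (σ (PEquiv.single s t)) (σ (PEquiv.single t t)) = σ (PEquiv.single s t) := by rw [← hσ, h1]
    rw [hG ⟨t, ht⟩, hx] at h2
    by_cases heq : (G ⟨t, ht⟩).1 = b'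
    · exact ⟨s', by rw [hx, heq]⟩
    · exfalso
      rw [smul_single_single_of_ne heq] at h2
      exact single_ne_bot h2.symm
  choose S hS using fun s => B2 a₀ ha₀ s
  choose T hT using fun t => B1 a₀ ha₀ t
  -- the main formula
  have main : ∀ s t : Fin n, σ (PEquiv.single s t) = PEquiv.single (S s) (T t) := by
    intro s t
    have h1 : smul n k (PEquiv.single s a₀ : IS n) (PEquiv.single a₀ t) = PEquiv.single s t :=
      smul_single_single ha₀ rfl
    have h2 := hσ (PEquiv.single s a₀) (PEquiv.single a₀ t)
    rw [h1, hS s, hT t, smul_single_single (G ⟨a₀, ha₀⟩).2 rfl] at h2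
    exact h2
  -- boundary compatibility
  have hSA : ∀ (s : Fin n) (hs : (s:ℕ) < k), S s = (G ⟨s, hs⟩).1 := by
    intro s hs
    obtain ⟨t'', h⟩ := B1 s hs a₀
    rw [main s a₀] at h
    exact (single_eq_single h).1
  have hTA : ∀ (t : Fin n) (ht : (t:ℕ) < k), T t = (G ⟨t, ht⟩).1 := by
    intro t ht
    obtain ⟨s'', h⟩ := B2 t ht a₀
    rw [main a₀ t] at h
    exact (single_eq_single h).2
  have hSnot : ∀ s : Fin n, ¬ (s:ℕ) < k → ¬ ((S s : Fin n) : ℕ) < k := by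
    intro s hs hcon
    have h1 : smul n k (σ.symm (PEquiv.single (S s) (S s))) (PEquiv.single s a₀) = ⊥ :=
      left_annihilate hs _
    have h2 := congrArg σ h1
    rw [hσ, Equiv.apply_symm_apply, sigma_bot σ hσ, main s a₀,
      smul_single_single hcon rfl] at h2
    exact single_ne_bot h2
  have hTnot : ∀ t : Fin n, ¬ (t:ℕ) < k → ¬ ((T t : Fin n) : ℕ) < k := by
    intro t ht hcon
    have h1 : smul n k (PEquiv.single a₀ t) (σ.symm (PEquiv.single (T t) (T t))) = ⊥ :=
      right_annihilate ht _
    have h2 := congrArg σ h1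
    rw [hσ, Equiv.apply_symm_apply, sigma_bot σ hσ, main a₀ t,
      smul_single_single hcon rfl] at h2
    exact single_ne_bot h2
  have hSinj : Function.Injective S := by
    intro s s' h
    have h1 : σ (PEquiv.single s a₀) = σ (PEquiv.single s' a₀) := by rw [hS s, hS s', h]
    exact (single_eq_single (σ.injective h1)).1
  have hTinj : Function.Injective T := by
    intro t t' h
    have h1 : σ (PEquiv.single a₀ t) = σ (PEquiv.single a₀ t') := by rw [hT t, hT t', h]
    exact (single_eq_single (σ.injective h1)).2
  -- assemble permutations
  let g : Perm {x : Fin n // (x:ℕ) < k} :=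
    Equiv.ofBijective G (Finite.injective_iff_bijective.mp hGinj)
  let H₁ : {x : Fin n // ¬ (x:ℕ) < k} → {x : Fin n // ¬ (x:ℕ) < k} :=
    fun s => ⟨S s.1, hSnot s.1 s.2⟩
  have hH₁ : Function.Injective H₁ := fun a b hab =>
    Subtype.ext (hSinj (congrArg Subtype.val hab))
  let h₁ : Perm {x : Fin n // ¬ (x:ℕ) < k} :=
    Equiv.ofBijective H₁ (Finite.injective_iff_bijective.mp hH₁)
  let H₂ : {x : Fin n // ¬ (x:ℕ) < k} → {x : Fin n // ¬ (x:ℕ) < k} :=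
    fun t => ⟨T t.1, hTnot t.1 t.2⟩
  have hH₂ : Function.Injective H₂ := fun a b hab =>
    Subtype.ext (hTinj (congrArg Subtype.val hab))
  let h₂ : Perm {x : Fin n // ¬ (x:ℕ) < k} :=
    Equiv.ofBijective H₂ (Finite.injective_iff_bijective.mp hH₂)
  have hb1 : ∀ s : Fin n, bowtie k g h₁ s = S s := by
    intro s
    show Equiv.Perm.subtypeCongr g h₁ s = S s
    by_cases hs : (s : ℕ) < k
    · rw [Equiv.Perm.subtypeCongr.left_apply g h₁ hs]
      show ((G ⟨s, hs⟩ : {x : Fin n // (x:ℕ) < k}) : Fin n) = S s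
      exact (hSA s hs).symm
    · rw [Equiv.Perm.subtypeCongr.right_apply g h₁ hs]
      rfl
  have hb2 : ∀ t : Fin n, bowtie k g h₂ t = T t := by
    intro t
    show Equiv.Perm.subtypeCongr g h₂ t = T t
    by_cases ht : (t : ℕ) < k
    · rw [Equiv.Perm.subtypeCongr.left_apply g h₂ ht]
      show ((G ⟨t, ht⟩ : {x : Fin n // (x:ℕ) < k}) : Fin n) = T t
      exact (hTA t ht).symm
    · rw [Equiv.Perm.subtypeCongr.right_apply g h₂ ht]
      rfl
  exact ⟨g, h₁, h₂, fun s t => by rw [main s t, hb1 s, hb2 t]⟩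
end

section
/- If a, a₁, b, b₁ ∈ IS_n satisfy a ∼ a₁ and b ∼ b₁, then a * b = a₁ * b₁ (equality, not merely equivalence, of the sandwich products). -/
open Equiv

lemma simRel_val_a {n k : ℕ} {a a₁ : IS n} (h : SimRel n k a a₁)
    {t y : Fin n} (hy : (y : ℕ) < k) (hat : a t = some y) : a₁ t = some y := by
  rcases h with ⟨h1, h2, h3, h4, h5, hval⟩ | ⟨h1, rfl⟩
  · by_cases ht : (t : ℕ) < k
    · have : t ∈ M1 n k a := ⟨ht, y, hy, hat⟩
      rw [← hval t (Or.inl (Or.inl this)), hat]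
    · have : t ∈ M3 n k a := ⟨ht, y, hy, hat⟩
      rw [← hval t (Or.inr this), hat]
  · exact hat

lemma simRel_val_b {n k : ℕ} {b b₁ : IS n} (h : SimRel n k b b₁)
    {y : Fin n} (hy : (y : ℕ) < k) : b y = b₁ y := by
  rcases h with ⟨h1, h2, h3, h4, h5, hval⟩ | ⟨h1, rfl⟩
  · cases hby : b y with
    | some z =>
      by_cases hz : (z : ℕ) < k
      · exact hby ▸ hval y (Or.inl (Or.inl ⟨hy, z, hz, hby⟩))
      · exact hby ▸ hval y (Or.inl (Or.inr ⟨hy, z, hz, hby⟩))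
    | none =>
      cases hb1y : b₁ y with
      | none => rfl
      | some z =>
        exfalso
        by_cases hz : (z : ℕ) < k
        · have : y ∈ M1 n k b := h3 ▸ (⟨hy, z, hz, hb1y⟩ : y ∈ M1 n k b₁)
          obtain ⟨-, w, -, hw⟩ := this
          rw [hby] at hw; cases hw
        · have : y ∈ M2 n k b := h4 ▸ (⟨hy, z, hz, hb1y⟩ : y ∈ M2 n k b₁)
          obtain ⟨-, w, -, hw⟩ := this
          rw [hby] at hw; cases hw
  · rfl

/-- `a ∼ a₁` and `b ∼ b₁` imply `a * b = a₁ * b₁`. -/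
theorem simRel_mul_eq (n k : ℕ) (hk : 1 ≤ k) (hkn : k ≤ n)
    (a a₁ b b₁ : IS n) (ha : SimRel n k a a₁) (hb : SimRel n k b b₁) :
    smul n k a b = smul n k a₁ b₁ := by
  apply PEquiv.ext; intro t
  show ((a t).bind (sandE n k)).bind b = ((a₁ t).bind (sandE n k)).bind b₁
  have key : (a t).bind (sandE n k) = (a₁ t).bind (sandE n k) := by
    cases hat : a t with
    | some y =>
      by_cases hy : (y : ℕ) < k
      · rw [simRel_val_a ha hy hat]
      · cases ha1t : a₁ t with
        | none => simp [sandE, hy]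
        | some z =>
          by_cases hz : (z : ℕ) < k
          · have := simRel_val_a (simRel_symm ha) hz ha1t
            rw [hat] at this
            cases this
            exact absurd hz hy
          · simp [sandE, hy, hz]
    | none =>
      cases ha1t : a₁ t with
      | none => rfl
      | some z =>
        by_cases hz : (z : ℕ) < k
        · have := simRel_val_a (simRel_symm ha) hz ha1t
          rw [hat] at this; cases this
        · simp [sandE, hz]
  rw [key]
  cases h : (a₁ t).bind (sandE n k) with
  | none => rfl
  | some y =>
    have hy : (y : ℕ) < k := by
      rcases Option.bind_eq_some_iff.mp h with ⟨w, -, hw⟩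
      by_contra hc
      simp [sandE, hc] at hw
      omega
    exact simRel_val_b hb hy
end
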